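/- For every real t with 0 < t < 2, with Y_{1,s} := Ỹ_s/Y_s: (i) Y₁(t)·Z₁(t)⁴·Y_{1,1}(t)^{−1/2} = W₁(t)⁴·X₁(t)^{−4}; (ii) Y₂(t)²·Z₂(t)⁴·Y_{1,2}(t)^{−1} = W₂(t)⁸·X₂(t)^{−4}; (iii) Y₃(t)³·Z₃(t)⁴·Y_{1,3}(t)^{−3/2} = W₃(t)¹²·X₃(t)^{−4}. (All fractional powers are real powers of positive real numbers; these are the instances s = 1, 2, 3 of Y_s^s·Z_s⁴·Y_{1,s}^{−s/2} = W_s^{4s}·X_s^{−4}.) -/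

import Mathlib

/-! Göttsche–Kool universal functions of a real variable `t`, with all square
roots the nonnegative real square roots.  The `t`-suffixed versions
(`gkYt`, `gkZt`, `gkSt`) are the sign-flipped functions obtained by
replacing `√t` with `−√t`. -/

noncomputable def gkY1 (t : ℝ) : ℝ := (1 + t) + Real.sqrt t * Real.sqrt (1 + 3*t/4)
noncomputable def gkYt1 (t : ℝ) : ℝ := (1 + t) - Real.sqrt t * Real.sqrt (1 + 3*t/4)
noncomputable def gkY2 (t : ℝ) : ℝ := Real.sqrt t + Real.sqrt (1 + t)
noncomputable def gkYt2 (t : ℝ) : ℝ := -Real.sqrt t + Real.sqrt (1 + t)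
noncomputable def gkY3 (t : ℝ) : ℝ := 1 + Real.sqrt t * Real.sqrt (1 - t/4)
noncomputable def gkYt3 (t : ℝ) : ℝ := 1 - Real.sqrt t * Real.sqrt (1 - t/4)
noncomputable def gkZ1 (t : ℝ) : ℝ :=
  (1 + 3*t/4 - (1/2) * Real.sqrt t * Real.sqrt (1 + 3*t/4)) / (1 + t/2)
noncomputable def gkZt1 (t : ℝ) : ℝ :=
  (1 + 3*t/4 + (1/2) * Real.sqrt t * Real.sqrt (1 + 3*t/4)) / (1 + t/2)
noncomputable def gkZ2 (t : ℝ) : ℝ := 1 + t - Real.sqrt t * Real.sqrt (1 + t)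
noncomputable def gkZt2 (t : ℝ) : ℝ := 1 + t + Real.sqrt t * Real.sqrt (1 + t)
noncomputable def gkZ3 (t : ℝ) : ℝ :=
  (1 + t/2) * ((1 - t/4)*(1 + t/2)
    - (3/2) * Real.sqrt t * Real.sqrt (1 - t/4) * (1 - t/6)) / (1 - t/2)^3
noncomputable def gkZt3 (t : ℝ) : ℝ :=
  (1 + t/2) * ((1 - t/4)*(1 + t/2)
    + (3/2) * Real.sqrt t * Real.sqrt (1 - t/4) * (1 - t/6)) / (1 - t/2)^3
noncomputable def gkS1 (t : ℝ) : ℝ := -t/2 + Real.sqrt t * Real.sqrt (1 + 3*t/4)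
noncomputable def gkSt1 (t : ℝ) : ℝ := -t/2 - Real.sqrt t * Real.sqrt (1 + 3*t/4)
noncomputable def gkS2 (t : ℝ) : ℝ := -t + Real.sqrt t * Real.sqrt (1 + t)
noncomputable def gkSt2 (t : ℝ) : ℝ := -t - Real.sqrt t * Real.sqrt (1 + t)
noncomputable def gkS3 (t : ℝ) : ℝ :=
  (-(3/2)*t*(1 - t/6) + Real.sqrt t * Real.sqrt (1 - t/4) * (1 + t/2)) / (1 - t/2)
noncomputable def gkSt3 (t : ℝ) : ℝ :=
  (-(3/2)*t*(1 - t/6) - Real.sqrt t * Real.sqrt (1 - t/4) * (1 + t/2)) / (1 - t/2)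
noncomputable def gkV2 (t : ℝ) : ℝ := (1 + t)^2
noncomputable def gkV3 (t : ℝ) : ℝ := (1 + t/2)^3 / (1 - t/2)
noncomputable def gkW1 (t : ℝ) : ℝ := (1 + t/2)⁻¹
noncomputable def gkW2 (t : ℝ) : ℝ := (Real.sqrt (1 + t))⁻¹
noncomputable def gkW3 (t : ℝ) : ℝ := 2 / (2 + t)
noncomputable def gkX1 (t : ℝ) : ℝ :=
  (1 + t/2) ^ (-(3:ℝ)/4) * (1 + 3*t/4) ^ (-(1:ℝ)/2)
noncomputable def gkX2 (t : ℝ) : ℝ := (1 + t) ^ (-(3:ℝ)/2)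
noncomputable def gkX3 (t : ℝ) : ℝ :=
  (1 - t/2) ^ ((3:ℝ)/4) * (1 - t/4) ^ (-(1:ℝ)/2) * (1 + t/2) ^ (-(4:ℝ))


lemma aux_half {x c : ℝ} (hc : 0 < c) (h : c^2 * x = 1) :
    x ^ (-(1:ℝ)/2) = c := by
  have hxe : x = (c⁻¹)^2 := by
    field_simp
    linarith [h]
  rw [hxe, show (-(1:ℝ)/2) = -(1/2 : ℝ) by norm_num, Real.rpow_neg (by positivity),
    ← Real.sqrt_eq_rpow, Real.sqrt_sq (by positivity), inv_inv]

lemma aux_3half {x c : ℝ} (hx : 0 < x) (hc : 0 < c) (h : c^2 * x = 1) :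
    x ^ (-(3:ℝ)/2) = c^3 := by
  rw [show (-(3:ℝ)/2) = (-(1:ℝ)/2) * ((3:ℕ):ℝ) by norm_num, Real.rpow_mul hx.le,
    Real.rpow_natCast, aux_half hc h]

lemma pow4_rpow_neg {x : ℝ} (hx : 0 < x) {p : ℝ} {n : ℕ} (h : p * 4 = -(n:ℝ)) :
    (x ^ p)^(4:ℕ) = (x^n)⁻¹ := by
  rw [← Real.rpow_natCast (x^p) 4, ← Real.rpow_mul hx.le]
  push_cast
  rw [h, Real.rpow_neg hx.le, Real.rpow_natCast]

lemma pow4_rpow_pos {x : ℝ} (hx : 0 < x) {p : ℝ} {n : ℕ} (h : p * 4 = (n:ℝ)) :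
    (x ^ p)^(4:ℕ) = x^n := by
  rw [← Real.rpow_natCast (x^p) 4, ← Real.rpow_mul hx.le]
  push_cast
  rw [h, Real.rpow_natCast]

/-- for `0 < t < 2`, with `Y_{1,s} = Ỹ_s/Y_s`, the identity
`Y_s^s Z_s⁴ Y_{1,s}^{−s/2} = W_s^{4s} X_s^{−4}` holds for `s = 1, 2, 3`
(all fractional powers being real powers of positive reals). -/
theorem stmt_15 (t : ℝ) (ht0 : 0 < t) (ht2 : t < 2) :
    gkY1 t * gkZ1 t ^ 4 * (gkYt1 t / gkY1 t) ^ (-(1:ℝ)/2)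
      = gkW1 t ^ 4 / gkX1 t ^ 4 ∧
    gkY2 t ^ 2 * gkZ2 t ^ 4 * (gkYt2 t / gkY2 t)⁻¹
      = gkW2 t ^ 8 / gkX2 t ^ 4 ∧
    gkY3 t ^ 3 * gkZ3 t ^ 4 * (gkYt3 t / gkY3 t) ^ (-(3:ℝ)/2)
      = gkW3 t ^ 12 / gkX3 t ^ 4 := by
  
  obtain ⟨a, ha0, rfl⟩ : ∃ a : ℝ, 0 ≤ a ∧ a^2 = t :=
    ⟨Real.sqrt t, Real.sqrt_nonneg t, Real.sq_sqrt ht0.le⟩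
  have ha : 0 < a := lt_of_le_of_ne ha0 (by rintro rfl; simp at ht0)
  refine ⟨?_, ?_, ?_⟩
  · -- Part 1
    simp only [gkY1, gkYt1, gkZ1, gkW1, gkX1]
    rw [Real.sqrt_sq ha0]
    have hb4 : (0:ℝ) < 1 + 3*a^2/4 := by positivity
    generalize hbdef : Real.sqrt (1 + 3*a^2/4) = b
    have hb0 : 0 < b := hbdef ▸ Real.sqrt_pos.mpr hb4
    have hb2 : b^2 = 1 + 3*a^2/4 := by rw [← hbdef]; exact Real.sq_sqrt hb4.le
    have hca : 0 < b - a/2 := by nlinarith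
    have hcb : 0 < b + a/2 := by positivity
    have hYpos : 0 < 1 + a^2 + a*b := by positivity
    have hYt_eq : 1 + a^2 - a*b = (b - a/2)^2 := by linear_combination -hb2
    have hY_eq : 1 + a^2 + a*b = (b + a/2)^2 := by linear_combination -hb2
    have hYtpos : 0 < 1 + a^2 - a*b := by rw [hYt_eq]; positivity
    have key : ((1 + a^2 - a*b)/(1 + a^2 + a*b)) ^ (-(1:ℝ)/2)
        = ((b + a/2)*(b - a/2))/(1 + a^2 - a*b) := by
      apply aux_half (by positivity)
      rw [div_pow, div_mul_div_comm,
        div_eq_one_iff_eq (mul_pos (pow_pos hYtpos 2) hYpos).ne', hYt_eq, hY_eq]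
      ring
    rw [key]
    have hZnum : 1 + 3*a^2/4 - 1/2*a*b = b*(b-a/2) := by linear_combination -hb2
    rw [hZnum, ← hb2]
    rw [mul_pow, pow4_rpow_neg (show (0:ℝ) < 1+a^2/2 by positivity)
        (show (-(3:ℝ)/4) * 4 = -((3:ℕ):ℝ) by norm_num),
      pow4_rpow_neg (show (0:ℝ) < b^2 by positivity)
        (show (-(1:ℝ)/2) * 4 = -((2:ℕ):ℝ) by norm_num)]
    have huv : 1 + a^2/2 = (b + a/2)*(b - a/2) := by linear_combination -hb2
    have h1 : b - a/2 ≠ 0 := hca.ne'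
    have h2 : b + a/2 ≠ 0 := hcb.ne'
    have hu0 : (1 + a^2/2 : ℝ) ≠ 0 := by positivity
    have hrhs : ((1 + a^2/2 : ℝ))⁻¹^4 / (((1 + a^2/2)^3)⁻¹ * ((b^2)^2)⁻¹)
        = b^4/(1 + a^2/2) := by
      field_simp
    rw [hrhs, hYt_eq, hY_eq, huv]
    rw [div_pow, mul_div_assoc', mul_div_assoc', div_mul_eq_mul_div, div_div,
      div_eq_div_iff (by positivity) (by positivity)]
    ring
  · -- Part 2
    simp only [gkY2, gkYt2, gkZ2, gkW2, gkX2]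
    rw [Real.sqrt_sq ha0]
    have hb4 : (0:ℝ) < 1 + a^2 := by positivity
    generalize hbdef : Real.sqrt (1 + a^2) = b
    have hb0 : 0 < b := hbdef ▸ Real.sqrt_pos.mpr hb4
    have hb2 : b^2 = 1 + a^2 := by rw [← hbdef]; exact Real.sq_sqrt hb4.le
    have h1 : (b + a) * (b - a) = 1 := by linear_combination hb2
    have hba : 0 < b - a := by nlinarith
    have hZ : 1 + a^2 - a*b = b*(b-a) := by linear_combination -hb2
    rw [inv_div, hZ, ← hb2]
    rw [pow4_rpow_neg (show (0:ℝ) < b^2 by positivity)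
      (show (-(3:ℝ)/2) * 4 = -((6:ℕ):ℝ) by norm_num)]
    have hY0 : a + b ≠ 0 := by positivity
    have hYt0 : -a + b ≠ 0 := by rw [neg_add_eq_sub]; exact hba.ne'
    field_simp
    linear_combination (b-a)*(((b+a)*(b-a))^2 + (b+a)*(b-a) + 1) * h1
  · -- Part 3
    simp only [gkY3, gkYt3, gkZ3, gkW3, gkX3]
    rw [Real.sqrt_sq ha0]
    have hb4 : (0:ℝ) < 1 - a^2/4 := by nlinarith
    generalize hbdef : Real.sqrt (1 - a^2/4) = b
    have hb0 : 0 < b := hbdef ▸ Real.sqrt_pos.mpr hb4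
    have hb2 : b^2 = 1 - a^2/4 := by rw [← hbdef]; exact Real.sq_sqrt hb4.le
    have hc : (0:ℝ) < 1 - a^2/2 := by nlinarith
    have hY3pos : (0:ℝ) < 1 + a*b := by positivity
    have hYt3pos : (0:ℝ) < 1 - a*b := by
      nlinarith [mul_nonneg ha0 hb0.le, mul_pos hc hc, sq_nonneg (a*b-1)]
    have hprod3 : (1 + a*b)*(1 - a*b) = (1 - a^2/2)^2 := by
      linear_combination (-a^2) * hb2
    have key3 : ((1 - a*b)/(1 + a*b)) ^ (-(3:ℝ)/2) = ((1 - a^2/2)/(1 - a*b))^3 := by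
      apply aux_3half (div_pos hYt3pos hY3pos) (div_pos hc hYt3pos)
      rw [div_pow, div_mul_div_comm,
        div_eq_one_iff_eq (mul_pos (pow_pos hYt3pos 2) hY3pos).ne']
      linear_combination (-(1 - a*b)) * hprod3
    rw [key3]
    have hN2 : ((1 - a^2/4) * (1 + a^2/2) - 3/2*a*b*(1 - a^2/6))^2
        = b^2 * (1 - a*b)^3 := by
      linear_combination (-1 + 3*a*b - 3/4*a^2 - 3*a^2*b^2 + a^3*b + a^3*b^3
        - 1/4*a^5*b + 1/16*a^6) * hb2
    have hN4 : ((1 - a^2/4) * (1 + a^2/2) - 3/2*a*b*(1 - a^2/6))^(4:ℕ)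
        = (b^2*(1 - a*b)^3)^2 := by
      rw [← hN2]; ring
    have hZ4 : ((1 + a^2/2) * ((1 - a^2/4) * (1 + a^2/2) - 3/2*a*b*(1 - a^2/6))
          / (1 - a^2/2)^3)^4
        = (1 + a^2/2)^4 * (b^2*(1 - a*b)^3)^2 / (1 - a^2/2)^12 := by
      rw [div_pow, mul_pow, hN4, ← pow_mul]
    have hX34 : (((1 - a^2/2) ^ ((3:ℝ)/4) * (b^2) ^ (-(1:ℝ)/2)
          * (1 + a^2/2) ^ (-(4:ℝ)))^(4:ℕ))
        = (1 - a^2/2)^3 * ((b^2)^2)⁻¹ * ((1 + a^2/2)^16)⁻¹ := by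
      rw [mul_pow, mul_pow,
        pow4_rpow_pos hc (show (3:ℝ)/4*4 = ((3:ℕ):ℝ) by norm_num),
        pow4_rpow_neg (show (0:ℝ) < b^2 by positivity)
          (show (-(1:ℝ)/2)*4 = -((2:ℕ):ℝ) by norm_num),
        pow4_rpow_neg (show (0:ℝ) < 1 + a^2/2 by positivity)
          (show (-(4:ℝ))*4 = -((16:ℕ):ℝ) by norm_num)]
    rw [hZ4, ← hb2, hX34]
    have hrhs3 : ((2:ℝ)/(2 + a^2))^12 / ((1 - a^2/2)^3 * ((b^2)^2)⁻¹ * ((1 + a^2/2)^16)⁻¹)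
        = 2^12 * (b^2)^2 * (1 + a^2/2)^16 / ((2 + a^2)^12 * (1 - a^2/2)^3) := by
      rw [div_pow]
      field_simp
    rw [hrhs3, div_pow, mul_div_assoc', mul_div_assoc', div_mul_eq_mul_div, div_div,
      div_eq_div_iff (by positivity) (by positivity)]
    linear_combination (4096*(1 + a^2/2)^16*b^4*(1 - a*b)^3*(1 - a^2/2)^6*
      (((1 + a*b)*(1 - a*b))^2 + (1 + a*b)*(1 - a*b)*(1 - a^2/2)^2 + (1 - a^2/2)^4)) * hprod3
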